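/- On a weak nearly Sasakian manifold M^{2n+1}(φ,Q,ξ,η,g) satisfying condition (4), the tensor h = ∇ξ + φ is skew-symmetric (g(hX, X) = 0 for all X), satisfies hξ = 0 and η∘h = 0, the covariant derivative of η is given by (∇_X η)(Y) = g((h-φ)X, Y) for all vector fields X, Y, and η is a Killing 1-form, i.e. (∇_X η)(X) = 0 for all vector fields X. -/
import Mathlib


/-- An abstract (Koszul-style) model of the algebra of smooth vector fields on a
`(2n+1)`-dimensional Riemannian manifold `M` carrying a weak nearly Sasakian
structure `(φ, Q, ξ, η, g)`: `VF` is the space of (smooth) vector fields, `fsmul`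
is multiplication of a vector field by a smooth function `M → ℝ`, `lie` is the
Lie bracket, `deriv X f` is the derivative of the function `f` in the direction of
the vector field `X`, `g` is the Riemannian metric, `cov` is its Levi-Civita
connection, and `frame` is an orthonormal frame (encoding that `dim M = 2n+1`).
The axioms are: `VF` is a module over functions, `deriv` is a derivation, `g` is a
symmetric positive definite function-bilinear form, `cov` is a torsion-free metric
connection, `φ` and `Q` are `(1,1)`-tensor fields with `Q` nonsingular, `η` is a
1-form, `φ² = -Q + η ⊗ ξ`, `η(ξ) = 1`, `Qξ = ξ`, `ker η` is `φ`-invariant,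
`g(φX, φY) = g(X, QY) - η(X)η(Y)`, and the nearly Sasakian condition
`(∇_Y φ)Y = g(Y,Y) ξ - η(Y) Y`. -/
structure WeakNearlySasakianManifold (M : Type*) (n : ℕ) where
  VF : Type*
  [instAddCommGroup : AddCommGroup VF]
  [instModule : Module ℝ VF]
  fsmul : (M → ℝ) → VF → VF
  lie : VF → VF → VF
  deriv : VF → (M → ℝ) → M → ℝ
  g : VF → VF → M → ℝ
  cov : VF → VF → VF
  phi : VF → VF
  Q : VF → VF
  xi : VF
  eta : VF → M → ℝ
  frame : Fin (2 * n + 1) → VF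
  npos : 1 ≤ n
  -- `fsmul` makes `VF` a module over the smooth functions
  fsmul_one : ∀ X, fsmul 1 X = X
  fsmul_add : ∀ f X Y, fsmul f (X + Y) = fsmul f X + fsmul f Y
  add_fsmul : ∀ f₁ f₂ X, fsmul (f₁ + f₂) X = fsmul f₁ X + fsmul f₂ X
  mul_fsmul : ∀ f₁ f₂ X, fsmul (f₁ * f₂) X = fsmul f₁ (fsmul f₂ X)
  fsmul_const : ∀ (c : ℝ) X, fsmul (fun _ => c) X = c • X
  -- `deriv` is a derivation in the function, tensorial in the vector field
  deriv_add : ∀ X f₁ f₂, deriv X (f₁ + f₂) = deriv X f₁ + deriv X f₂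
  deriv_mul : ∀ X f₁ f₂, deriv X (f₁ * f₂) = f₁ * deriv X f₂ + f₂ * deriv X f₁
  deriv_const : ∀ X (c : ℝ), deriv X (fun _ => c) = 0
  deriv_add_vf : ∀ X Y f, deriv (X + Y) f = deriv X f + deriv Y f
  deriv_fsmul : ∀ f X k, deriv (fsmul f X) k = f * deriv X k
  -- the Lie bracket
  lie_antisymm : ∀ X Y, lie X Y = -lie Y X
  lie_add_right : ∀ X Y Z, lie X (Y + Z) = lie X Y + lie X Z
  lie_leibniz : ∀ X f Y, lie X (fsmul f Y) = fsmul f (lie X Y) + fsmul (deriv X f) Y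
  -- the Riemannian metric
  g_symm : ∀ X Y, g X Y = g Y X
  g_add_left : ∀ X Y Z, g (X + Y) Z = g X Z + g Y Z
  g_fsmul_left : ∀ f X Y, g (fsmul f X) Y = f * g X Y
  g_nonneg : ∀ X p, 0 ≤ g X X p
  g_nondegenerate : ∀ X, g X X = 0 → X = 0
  -- the Levi-Civita connection
  cov_add_left : ∀ X Y Z, cov (X + Y) Z = cov X Z + cov Y Z
  cov_add_right : ∀ X Y Z, cov X (Y + Z) = cov X Y + cov X Z
  cov_fsmul_left : ∀ f X Y, cov (fsmul f X) Y = fsmul f (cov X Y)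
  cov_leibniz : ∀ f X Y, cov X (fsmul f Y) = fsmul f (cov X Y) + fsmul (deriv X f) Y
  cov_torsion_free : ∀ X Y, cov X Y - cov Y X = lie X Y
  cov_metric : ∀ X Y Z, deriv X (g Y Z) = g (cov X Y) Z + g Y (cov X Z)
  -- `φ`, `Q` are `(1,1)`-tensor fields, `Q` nonsingular, `η` is a 1-form
  phi_add : ∀ X Y, phi (X + Y) = phi X + phi Y
  phi_fsmul : ∀ f X, phi (fsmul f X) = fsmul f (phi X)
  Q_add : ∀ X Y, Q (X + Y) = Q X + Q Y
  Q_fsmul : ∀ f X, Q (fsmul f X) = fsmul f (Q X)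
  Q_bijective : Function.Bijective Q
  eta_add : ∀ X Y, eta (X + Y) = eta X + eta Y
  eta_fsmul : ∀ f X, eta (fsmul f X) = f * eta X
  -- the weak almost contact metric conditions
  phi_phi : ∀ X, phi (phi X) = -Q X + fsmul (eta X) xi
  eta_xi : eta xi = 1
  Q_xi : Q xi = xi
  phi_invariant : ∀ X, eta X = 0 → eta (phi X) = 0
  metric_compat : ∀ X Y, g (phi X) (phi Y) = g X (Q Y) - eta X * eta Y
  -- an orthonormal frame: `M` has dimension `2 * n + 1`
  frame_orthonormal : ∀ i j, g (frame i) (frame j) = fun _ => if i = j then (1 : ℝ) else 0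
  frame_spanning : ∀ X, ∃ c : Fin (2 * n + 1) → M → ℝ, X = ∑ i, fsmul (c i) (frame i)
  -- the weak nearly Sasakian condition `(∇_Y φ)Y = g(Y,Y) ξ - η(Y) Y`
  nearlySasakian : ∀ Y, cov Y (phi Y) - phi (cov Y Y) = fsmul (g Y Y) xi - fsmul (eta Y) Y

attribute [instance] WeakNearlySasakianManifold.instAddCommGroup
attribute [instance] WeakNearlySasakianManifold.instModule

namespace WeakNearlySasakianManifold

variable {M : Type*} {n : ℕ} (S : WeakNearlySasakianManifold M n)

/-- `(∇_X φ) Y` -/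
def covPhi (X Y : S.VF) : S.VF := S.cov X (S.phi Y) - S.phi (S.cov X Y)

/-- the tensor `Q̃ = Q - id` -/
def Qt (X : S.VF) : S.VF := S.Q X - X

/-- `(∇_X Q̃) Y` -/
def covQt (X Y : S.VF) : S.VF := S.cov X (S.Qt Y) - S.Qt (S.cov X Y)

/-- the tensor `h = ∇ξ + φ` -/
def h (X : S.VF) : S.VF := S.cov X S.xi + S.phi X

/-- `(∇_X h) Y` -/
def covh (X Y : S.VF) : S.VF := S.cov X (S.h Y) - S.h (S.cov X Y)

/-- the tensor `(h - φ)` -/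
def hmphi (X : S.VF) : S.VF := S.h X - S.phi X

/-- `(∇_X (h - φ)) Y` -/
def covhmphi (X Y : S.VF) : S.VF := S.cov X (S.hmphi Y) - S.hmphi (S.cov X Y)

/-- the Riemann curvature tensor `R_{X,Y} Z = ∇_X ∇_Y Z - ∇_Y ∇_X Z - ∇_{[X,Y]} Z` -/
def R (X Y Z : S.VF) : S.VF :=
  S.cov X (S.cov Y Z) - S.cov Y (S.cov X Z) - S.cov (S.lie X Y) Z

/-- Condition (4): `(∇_X Q̃) Y = 0` for every vector field `X` and every `Y ∈ ker η`. -/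
def Cond4 : Prop := ∀ X Y : S.VF, S.eta Y = 0 → S.covQt X Y = 0

/-- Condition (5): `R_{Q̃X, Y} Z ∈ ker η` for every vector field `X` and all `Y, Z ∈ ker η`. -/
def Cond5 : Prop :=
  ∀ X Y Z : S.VF, S.eta Y = 0 → S.eta Z = 0 → S.eta (S.R (S.Qt X) Y Z) = 0

/-- the trace of a `(1,1)`-tensor field -/
def trace (A : S.VF → S.VF) : M → ℝ := ∑ i, S.g (A (S.frame i)) (S.frame i)

/-- the Ricci tensor `Ric(X,Y) = Σᵢ g(R_{Eᵢ,X} Y, Eᵢ)` -/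
def Ric (X Y : S.VF) : M → ℝ := ∑ i, S.g (S.R (S.frame i) X Y) (S.frame i)

end WeakNearlySasakianManifold

section AuxAdd

private theorem wns_ah_zero {A B : Type*} [AddCommGroup A] [AddCommGroup B] (f : A → B)
    (hf : ∀ x y, f (x + y) = f x + f y) : f 0 = 0 := by
  have h := hf 0 0
  rw [add_zero] at h
  exact left_eq_add.mp h

private theorem wns_ah_neg {A B : Type*} [AddCommGroup A] [AddCommGroup B] (f : A → B)
    (hf : ∀ x y, f (x + y) = f x + f y) (x : A) : f (-x) = -f x := by
  have h := hf x (-x)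
  rw [add_neg_cancel, wns_ah_zero f hf] at h
  exact (neg_eq_of_add_eq_zero_right h.symm).symm

private theorem wns_ah_sub {A B : Type*} [AddCommGroup A] [AddCommGroup B] (f : A → B)
    (hf : ∀ x y, f (x + y) = f x + f y) (x y : A) : f (x - y) = f x - f y := by
  rw [sub_eq_add_neg, hf, wns_ah_neg f hf, sub_eq_add_neg]

end AuxAdd

namespace WeakNearlySasakianManifold

variable {M : Type*} {n : ℕ} (S : WeakNearlySasakianManifold M n)

/-! ### basic linearity lemmas -/

lemma g_add_right' (X Y Z : S.VF) : S.g X (Y + Z) = S.g X Y + S.g X Z := by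
  rw [S.g_symm X (Y + Z), S.g_add_left, S.g_symm Y X, S.g_symm Z X]

lemma g_zero_left' (Y : S.VF) : S.g 0 Y = 0 :=
  wns_ah_zero (fun X => S.g X Y) (fun a b => S.g_add_left a b Y)

lemma g_zero_right' (X : S.VF) : S.g X 0 = 0 := by
  rw [S.g_symm, g_zero_left']

lemma g_neg_left' (X Y : S.VF) : S.g (-X) Y = -S.g X Y :=
  wns_ah_neg (fun X => S.g X Y) (fun a b => S.g_add_left a b Y) X

lemma g_sub_left' (X Y Z : S.VF) : S.g (X - Y) Z = S.g X Z - S.g Y Z :=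
  wns_ah_sub (fun X => S.g X Z) (fun a b => S.g_add_left a b Z) X Y

lemma g_neg_right' (X Y : S.VF) : S.g X (-Y) = -S.g X Y := by
  rw [S.g_symm, g_neg_left', S.g_symm]

lemma g_sub_right' (X Y Z : S.VF) : S.g X (Y - Z) = S.g X Y - S.g X Z := by
  rw [S.g_symm, g_sub_left', S.g_symm Y X, S.g_symm Z X]

lemma g_fsmul_right' (f : M → ℝ) (X Y : S.VF) : S.g X (S.fsmul f Y) = f * S.g X Y := by
  rw [S.g_symm, S.g_fsmul_left, S.g_symm]

lemma phi_zero' : S.phi 0 = 0 := wns_ah_zero S.phi S.phi_add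

lemma phi_neg' (X : S.VF) : S.phi (-X) = -S.phi X := wns_ah_neg S.phi S.phi_add X

lemma phi_sub' (X Y : S.VF) : S.phi (X - Y) = S.phi X - S.phi Y := wns_ah_sub S.phi S.phi_add X Y

lemma Q_zero' : S.Q 0 = 0 := wns_ah_zero S.Q S.Q_add

lemma Q_sub' (X Y : S.VF) : S.Q (X - Y) = S.Q X - S.Q Y := wns_ah_sub S.Q S.Q_add X Y

lemma eta_zero' : S.eta 0 = 0 := wns_ah_zero S.eta S.eta_add

lemma eta_sub' (X Y : S.VF) : S.eta (X - Y) = S.eta X - S.eta Y := wns_ah_sub S.eta S.eta_add X Y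

lemma cov_zero_right' (X : S.VF) : S.cov X 0 = 0 := wns_ah_zero (S.cov X) (S.cov_add_right X)

lemma cov_sub_right' (X Y Z : S.VF) : S.cov X (Y - Z) = S.cov X Y - S.cov X Z :=
  wns_ah_sub (S.cov X) (S.cov_add_right X) Y Z

lemma fsmul_zero' (f : M → ℝ) : S.fsmul f 0 = 0 := wns_ah_zero (S.fsmul f) (S.fsmul_add f)

lemma fsmul_sub' (f : M → ℝ) (X Y : S.VF) : S.fsmul f (X - Y) = S.fsmul f X - S.fsmul f Y :=
  wns_ah_sub (S.fsmul f) (S.fsmul_add f) X Y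

lemma zero_fsmul' (X : S.VF) : S.fsmul (0 : M → ℝ) X = 0 := by
  rw [show (0 : M → ℝ) = (fun _ => (0 : ℝ)) from rfl, S.fsmul_const, zero_smul]

lemma deriv_one' (X : S.VF) : S.deriv X (1 : M → ℝ) = 0 := by
  rw [show (1 : M → ℝ) = (fun _ => (1 : ℝ)) from rfl, S.deriv_const]

lemma deriv_neg_fn' (X : S.VF) (f : M → ℝ) : S.deriv X (-f) = -S.deriv X f := by
  have hf : -f = (fun _ => (-1 : ℝ)) * f := by funext p; simp
  rw [hf, S.deriv_mul, S.deriv_const]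
  funext p; simp

lemma deriv_sub_fn' (X : S.VF) (f k : M → ℝ) :
    S.deriv X (f - k) = S.deriv X f - S.deriv X k := by
  rw [sub_eq_add_neg, S.deriv_add, deriv_neg_fn', sub_eq_add_neg]

/-! ### Q is self-adjoint -/

lemma g_Q_right (X Y : S.VF) : S.g X (S.Q Y) = S.g (S.Q X) Y := by
  have h1 := S.metric_compat X Y
  have h2 := S.metric_compat Y X
  rw [S.g_symm (S.phi Y) (S.phi X)] at h2
  rw [S.g_symm Y (S.Q X)] at h2
  funext p
  have c1 := congrFun h1 p
  have c2 := congrFun h2 p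
  simp only [Pi.sub_apply, Pi.mul_apply] at c1 c2
  have := mul_comm (S.eta X p) (S.eta Y p)
  linarith

/-! ### φ ξ = 0 and consequences -/

lemma phi_phi_xi : S.phi (S.phi S.xi) = 0 := by
  rw [S.phi_phi, S.Q_xi, S.eta_xi, S.fsmul_one, neg_add_cancel]

lemma eta_phi_xi : S.eta (S.phi S.xi) = 0 := by
  have h1 := S.phi_phi (S.phi S.xi)
  rw [phi_phi_xi, phi_zero'] at h1
  have h2 : S.Q (S.phi S.xi) = S.fsmul (S.eta (S.phi S.xi)) S.xi := by
    have := congrArg (fun v => S.Q (S.phi S.xi) + v) h1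
    simpa using this
  have h3 : S.phi S.xi = S.fsmul (S.eta (S.phi S.xi)) S.xi := by
    refine S.Q_bijective.1 ?_
    rw [S.Q_fsmul, S.Q_xi]
    exact h2
  have h4 : S.fsmul (S.eta (S.phi S.xi) * S.eta (S.phi S.xi)) S.xi = 0 := by
    rw [S.mul_fsmul, ← h3, ← S.phi_fsmul, ← h3, phi_phi_xi]
  have h5 := congrArg S.eta h4
  rw [S.eta_fsmul, S.eta_xi, mul_one, eta_zero'] at h5
  funext p
  have := congrFun h5 p
  simp only [Pi.mul_apply, Pi.zero_apply] at this ⊢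
  exact mul_self_eq_zero.mp this

lemma phi_xi' : S.phi S.xi = 0 := by
  have h1 := S.phi_phi (S.phi S.xi)
  rw [phi_phi_xi, phi_zero', eta_phi_xi, zero_fsmul', add_zero] at h1
  have h2 : S.Q (S.phi S.xi) = S.Q 0 := by
    rw [Q_zero', ← neg_eq_zero]
    exact h1.symm
  exact S.Q_bijective.1 h2

lemma eta_eq_g_xi (X : S.VF) : S.eta X = S.g X S.xi := by
  have h := S.metric_compat X S.xi
  rw [phi_xi', g_zero_right', S.Q_xi, S.eta_xi, mul_one] at h
  exact (eq_of_sub_eq_zero h.symm).symm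

lemma g_xi_xi' : S.g S.xi S.xi = 1 := (eta_eq_g_xi S S.xi).symm.trans S.eta_xi

lemma eta_phi' (X : S.VF) : S.eta (S.phi X) = 0 := by
  have hdec : S.phi X = S.phi (X - S.fsmul (S.eta X) S.xi) := by
    rw [phi_sub', S.phi_fsmul, phi_xi', fsmul_zero', sub_zero]
  rw [hdec]
  exact S.phi_invariant _ (by rw [eta_sub', S.eta_fsmul, S.eta_xi, mul_one, sub_self])

lemma g_phi_xi' (X : S.VF) : S.g (S.phi X) S.xi = 0 := by
  rw [← eta_eq_g_xi, eta_phi']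

/-! ### φ commutes with Q and is skew-adjoint -/

lemma phiQ_comm (Z : S.VF) : S.phi (S.Q Z) = S.Q (S.phi Z) := by
  have h1 := S.phi_phi (S.phi Z)
  rw [eta_phi', zero_fsmul', add_zero] at h1
  have h2 := congrArg S.phi (S.phi_phi Z)
  rw [S.phi_add, phi_neg', S.phi_fsmul, phi_xi', fsmul_zero', add_zero] at h2
  have h3 := h1.symm.trans h2
  exact (neg_inj.mp h3).symm

lemma phi_skew (X Y : S.VF) : S.g (S.phi X) Y = -S.g X (S.phi Y) := by
  obtain ⟨Z, rfl⟩ := S.Q_bijective.2 Y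
  have h1 := S.metric_compat X (S.phi Z)
  rw [S.phi_phi Z, eta_phi', mul_zero, sub_zero] at h1
  rw [g_add_right', g_neg_right', g_fsmul_right', g_phi_xi', mul_zero, add_zero] at h1
  rw [phiQ_comm, ← h1, neg_neg]

lemma g_phi_self (X : S.VF) : S.g X (S.phi X) = 0 := by
  have h := phi_skew S X X
  rw [S.g_symm (S.phi X) X] at h
  funext p
  have := congrFun h p
  simp only [Pi.neg_apply, Pi.zero_apply] at this ⊢
  linarith

lemma g_phi_self' (X : S.VF) : S.g (S.phi X) X = 0 := by
  rw [S.g_symm, g_phi_self]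

/-! ### ∇ξ is η-horizontal and ∇_ξ ξ = 0 -/

lemma eta_cov_xi (X : S.VF) : S.eta (S.cov X S.xi) = 0 := by
  have h1 := S.cov_metric X S.xi S.xi
  rw [S.g_symm S.xi (S.cov X S.xi)] at h1
  have h2 : S.deriv X (S.g S.xi S.xi) = 0 := by rw [g_xi_xi', deriv_one']
  rw [h2] at h1
  rw [eta_eq_g_xi]
  funext p
  have := congrFun h1.symm p
  simp only [Pi.add_apply, Pi.zero_apply] at this ⊢
  linarith

lemma cov_xi_xi' : S.cov S.xi S.xi = 0 := by
  have e := S.nearlySasakian S.xi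
  rw [phi_xi', cov_zero_right', g_xi_xi', S.eta_xi, S.fsmul_one, sub_self, zero_sub] at e
  have hphi : S.phi (S.cov S.xi S.xi) = 0 := neg_eq_zero.mp e
  have h2 := S.phi_phi (S.cov S.xi S.xi)
  rw [hphi, phi_zero', eta_cov_xi, zero_fsmul', add_zero] at h2
  have h3 : S.Q (S.cov S.xi S.xi) = S.Q 0 := by
    rw [Q_zero']
    exact neg_eq_zero.mp h2.symm
  exact S.Q_bijective.1 h3

/-! ### polarization of the nearly Sasakian identity -/

lemma covPhi_polar (X Y : S.VF) :
    S.covPhi X Y + S.covPhi Y X =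
      S.fsmul (S.g X Y) S.xi + S.fsmul (S.g Y X) S.xi
        - S.fsmul (S.eta X) Y - S.fsmul (S.eta Y) X := by
  have e1 := S.nearlySasakian (X + Y)
  have e2 := S.nearlySasakian X
  have e3 := S.nearlySasakian Y
  calc S.covPhi X Y + S.covPhi Y X
      = (S.cov (X + Y) (S.phi (X + Y)) - S.phi (S.cov (X + Y) (X + Y)))
        - (S.cov X (S.phi X) - S.phi (S.cov X X))
        - (S.cov Y (S.phi Y) - S.phi (S.cov Y Y)) := by
        simp only [covPhi, S.phi_add, S.cov_add_left, S.cov_add_right]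
        abel
    _ = (S.fsmul (S.g (X + Y) (X + Y)) S.xi - S.fsmul (S.eta (X + Y)) (X + Y))
        - (S.fsmul (S.g X X) S.xi - S.fsmul (S.eta X) X)
        - (S.fsmul (S.g Y Y) S.xi - S.fsmul (S.eta Y) Y) := by rw [e1, e2, e3]
    _ = _ := by
        simp only [S.g_add_left, g_add_right', S.eta_add, S.add_fsmul, S.fsmul_add]
        abel

lemma covPhi_X_xi (X : S.VF) : S.covPhi X S.xi = -S.phi (S.cov X S.xi) := by
  unfold covPhi
  rw [phi_xi', cov_zero_right', zero_sub]

lemma covPhi_xi_eq (X : S.VF) :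
    S.covPhi S.xi X = S.phi (S.cov X S.xi) + S.fsmul (S.eta X) S.xi - X := by
  have hp := covPhi_polar S X S.xi
  rw [covPhi_X_xi, S.g_symm S.xi X, ← eta_eq_g_xi, S.eta_xi, S.fsmul_one] at hp
  have h2 : S.covPhi S.xi X =
      S.phi (S.cov X S.xi) + (S.fsmul (S.eta X) S.xi + S.fsmul (S.eta X) S.xi
        - S.fsmul (S.eta X) S.xi - X) := by
    rw [← hp]; abel
  rw [h2]; abel

/-! ### consequences of condition (4) -/

lemma covQt_add_right (Z A B : S.VF) :
    S.covQt Z (A + B) = S.covQt Z A + S.covQt Z B := by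
  unfold covQt Qt
  simp only [S.Q_add, cov_sub_right', S.cov_add_right]
  abel

lemma Qt_xi : S.Qt S.xi = 0 := by
  unfold Qt; rw [S.Q_xi, sub_self]

lemma covQt_fsmul_xi (Z : S.VF) (f : M → ℝ) :
    S.covQt Z (S.fsmul f S.xi) = -S.fsmul f (S.Qt (S.cov Z S.xi)) := by
  unfold covQt
  have h1 : S.Qt (S.fsmul f S.xi) = 0 := by
    unfold Qt; rw [S.Q_fsmul, S.Q_xi, sub_self]
  rw [h1, cov_zero_right', S.cov_leibniz]
  unfold Qt
  rw [S.Q_add, S.Q_fsmul, S.Q_fsmul, S.Q_xi, fsmul_sub']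
  abel

lemma covQt_eq (h4 : S.Cond4) (Z X : S.VF) :
    S.covQt Z X = -S.fsmul (S.eta X) (S.Qt (S.cov Z S.xi)) := by
  have hdec : X = (X - S.fsmul (S.eta X) S.xi) + S.fsmul (S.eta X) S.xi := by abel
  have h0 : S.eta (X - S.fsmul (S.eta X) S.xi) = 0 := by
    rw [eta_sub', S.eta_fsmul, S.eta_xi, mul_one, sub_self]
  calc S.covQt Z X
      = S.covQt Z ((X - S.fsmul (S.eta X) S.xi) + S.fsmul (S.eta X) S.xi) := by rw [← hdec]
    _ = S.covQt Z (X - S.fsmul (S.eta X) S.xi) + S.covQt Z (S.fsmul (S.eta X) S.xi) :=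
        covQt_add_right S Z _ _
    _ = 0 + -S.fsmul (S.eta X) (S.Qt (S.cov Z S.xi)) := by
        rw [h4 Z _ h0, covQt_fsmul_xi]
    _ = _ := by rw [zero_add]

lemma covQt_expand (Z X : S.VF) :
    S.covQt Z X = S.cov Z (S.Q X) - S.Q (S.cov Z X) := by
  unfold covQt Qt
  rw [cov_sub_right']
  abel

lemma cov_Q' (h4 : S.Cond4) (Z X : S.VF) :
    S.cov Z (S.Q X) = S.Q (S.cov Z X) - S.fsmul (S.eta X) (S.Qt (S.cov Z S.xi)) := by
  have h2 := covQt_eq S h4 Z X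
  rw [covQt_expand] at h2
  rw [sub_eq_iff_eq_add.mp h2]
  abel

/-! ### derivative of η -/

lemma deriv_eta' (Z X : S.VF) :
    S.deriv Z (S.eta X) = S.eta (S.cov Z X) + S.g X (S.cov Z S.xi) := by
  rw [eta_eq_g_xi S X, eta_eq_g_xi S (S.cov Z X), S.cov_metric]

/-! ### key identity (E): g(QX, ∇_X ξ) = g(X, ∇_X ξ) -/

lemma g_Q_xi' (W : S.VF) : S.g (S.Q W) S.xi = S.eta W := by
  rw [← S.g_Q_right W S.xi, S.Q_xi, ← eta_eq_g_xi]

lemma g_Qt_xi' (W : S.VF) : S.g (S.Qt W) S.xi = 0 := by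
  unfold Qt
  rw [g_sub_left', g_Q_xi', ← eta_eq_g_xi, sub_self]

lemma E_lemma (h4 : S.Cond4) (X : S.VF) :
    S.g (S.Q X) (S.cov X S.xi) = S.g X (S.cov X S.xi) := by
  have hm := S.cov_metric X (S.Q X) S.xi
  rw [g_Q_xi'] at hm
  have h2 : S.g (S.cov X (S.Q X)) S.xi = S.eta (S.cov X X) := by
    rw [cov_Q' S h4 X X, g_sub_left', S.g_fsmul_left, g_Q_xi', g_Qt_xi', mul_zero, sub_zero]
  rw [h2] at hm
  have h3 := deriv_eta' S X X
  exact add_left_cancel (hm.symm.trans h3)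

/-! ### g((∇_ξ φ)X, φX) = 0 -/

lemma Qt_zero' : S.Qt 0 = 0 := by unfold Qt; rw [Q_zero', sub_zero]

lemma covPhi_xi_orth (h4 : S.Cond4) (X : S.VF) :
    S.g (S.covPhi S.xi X) (S.phi X) = 0 := by
  have hQxi : S.cov S.xi (S.Q X) = S.Q (S.cov S.xi X) := by
    rw [cov_Q' S h4, cov_xi_xi', Qt_zero', fsmul_zero', sub_zero]
  have h1 := S.cov_metric S.xi (S.phi X) (S.phi X)
  rw [S.g_symm (S.phi X) (S.cov S.xi (S.phi X))] at h1
  have h2 := S.metric_compat X X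
  have h3 := S.cov_metric S.xi X (S.Q X)
  rw [hQxi] at h3
  have h3' : S.g X (S.Q (S.cov S.xi X)) = S.g (S.cov S.xi X) (S.Q X) := by
    rw [S.g_Q_right X, S.g_symm, S.g_Q_right]
  rw [h3'] at h3
  have h5 := deriv_eta' S S.xi X
  rw [cov_xi_xi', g_zero_right', add_zero] at h5
  have h4' := S.deriv_mul S.xi (S.eta X) (S.eta X)
  rw [h5] at h4'
  have h6 := S.metric_compat (S.cov S.xi X) X
  have hd : S.deriv S.xi (S.g (S.phi X) (S.phi X)) =
      S.deriv S.xi (S.g X (S.Q X)) - S.deriv S.xi (S.eta X * S.eta X) := by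
    rw [h2, deriv_sub_fn']
  unfold covPhi
  rw [g_sub_left', h6]
  funext p
  have c1 := congrFun h1 p
  have chd := congrFun hd p
  have c3 := congrFun h3 p
  have c4 := congrFun h4' p
  simp only [Pi.add_apply, Pi.sub_apply, Pi.mul_apply, Pi.zero_apply] at c1 chd c3 c4 ⊢
  have hcomm := mul_comm (S.eta (S.cov S.xi X) p) (S.eta X p)
  linarith

/-! ### g(∇_X ξ, QX) = 0 and the Killing property -/

lemma g_covxi_Q (h4 : S.Cond4) (X : S.VF) : S.g (S.cov X S.xi) (S.Q X) = 0 := by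
  have h0 := covPhi_xi_orth S h4 X
  rw [covPhi_xi_eq S X] at h0
  rw [g_sub_left', S.g_add_left, S.g_fsmul_left] at h0
  have e1 := S.metric_compat (S.cov X S.xi) X
  rw [eta_cov_xi, zero_mul, sub_zero] at e1
  have e2 : S.g S.xi (S.phi X) = 0 := by
    rw [S.g_symm, g_phi_xi']
  rw [e1, e2, g_phi_self, mul_zero, add_zero, sub_zero] at h0
  exact h0

lemma g_covxi_self (h4 : S.Cond4) (X : S.VF) : S.g (S.cov X S.xi) X = 0 := by
  have e := E_lemma S h4 X
  have l22 := g_covxi_Q S h4 X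
  rw [S.g_symm (S.cov X S.xi) (S.Q X)] at l22
  rw [l22] at e
  rw [S.g_symm]
  exact e.symm

lemma hmphi_eq (X : S.VF) : S.hmphi X = S.cov X S.xi := by
  unfold hmphi h
  abel

end WeakNearlySasakianManifold


namespace WeakNearlySasakianManifold

/-- On a weak nearly Sasakian manifold satisfying condition (4), the tensor
`h = ∇ξ + φ` is skew-symmetric, `h ξ = 0`, `η ∘ h = 0`, the covariant derivative of
`η` is `(∇_X η)(Y) = g((h-φ)X, Y)`, and `η` is a Killing 1-form: `(∇_X η)(X) = 0`. -/
theorem h_skew_and_eta_killing {M : Type*} {n : ℕ}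
    (S : WeakNearlySasakianManifold M n) (h4 : S.Cond4) :
    (∀ X : S.VF, S.g (S.h X) X = 0) ∧
    S.h S.xi = 0 ∧
    (∀ X : S.VF, S.eta (S.h X) = 0) ∧
    (∀ X Y : S.VF, S.deriv X (S.eta Y) - S.eta (S.cov X Y) = S.g (S.hmphi X) Y) ∧
    (∀ X : S.VF, S.deriv X (S.eta X) - S.eta (S.cov X X) = 0) := by
  refine ⟨?_, ?_, ?_, ?_, ?_⟩
  · intro X
    show S.g (S.cov X S.xi + S.phi X) X = 0
    rw [S.g_add_left, g_covxi_self S h4 X, g_phi_self', add_zero]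
  · show S.cov S.xi S.xi + S.phi S.xi = 0
    rw [cov_xi_xi', phi_xi', add_zero]
  · intro X
    show S.eta (S.cov X S.xi + S.phi X) = 0
    rw [S.eta_add, eta_cov_xi, eta_phi', add_zero]
  · intro X Y
    rw [hmphi_eq, deriv_eta' S X Y, add_sub_cancel_left, S.g_symm]
  · intro X
    rw [deriv_eta' S X X, add_sub_cancel_left, S.g_symm]
    exact g_covxi_self S h4 X

end WeakNearlySasakianManifold
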